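/- Let k be a nilpotent Lie algebra with 1-dimensional center z, and k₁, k₂ subalgebras with k = k₁ + k₂, k₁ ∩ k₂ = z, and [k₁,k₂] = {0}. Suppose each kᵢ has 1-dimensional center z and has generic flat coadjoint orbits, in the sense that for every ξᵢ ∈ kᵢ* not vanishing on z there exists η in the coadjoint orbit data such that for every X ∈ kᵢ \ z there is Y ∈ kᵢ with ξᵢ([X,Y]) ≠ 0 (i.e. the isotropy algebra of generic functionals equals z). Then for every ξ ∈ k* vanishing on chosen complements k₁⁰, k₂⁰ (with kᵢ = z ∔ kᵢ⁰) but not on z, the isotropy algebra k_ξ equals z; that is, k also has generic flat coadjoint orbits. -/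

import Mathlib

/-- The coadjoint isotropy algebra `k_ξ = {X ∈ k : ξ([X,k]) = 0}`. -/
def isotropy {L : Type*} [LieRing L] [LieAlgebra ℝ L] (ξ : L →ₗ[ℝ] ℝ) :
    Submodule ℝ L where
  carrier := {X | ∀ Y : L, ξ ⁅X, Y⁆ = 0}
  add_mem' := by
    intro a b ha hb Y
    rw [add_lie, map_add, ha Y, hb Y, add_zero]
  zero_mem' := by
    intro Y
    rw [zero_lie, map_zero]
  smul_mem' := by
    intro c a ha Y
    rw [smul_lie, map_smul, ha Y, smul_zero]

/-- A reduced direct product `k = k₁ ×̃ k₂` of nilpotent Lie algebras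
with common 1-dimensional center `z` and generic flat coadjoint orbits again has
generic flat coadjoint orbits: for every `ξ ∈ k*` vanishing on the chosen
complements `c₁, c₂` but not on `z`, the isotropy algebra `k_ξ` equals `z`. -/
theorem reduced_direct_product_flat
    {K : Type*} [LieRing K] [LieAlgebra ℝ K] [Module.Finite ℝ K]
    [LieModule.IsNilpotent K K]
    (z : Submodule ℝ K) (hz : ∀ X : K, X ∈ z ↔ ∀ Y : K, ⁅X, Y⁆ = 0)
    (hz1 : Module.finrank ℝ z = 1)
    (k₁ k₂ : LieSubalgebra ℝ K)
    (hsum : k₁.toSubmodule ⊔ k₂.toSubmodule = ⊤)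
    (hint : k₁.toSubmodule ⊓ k₂.toSubmodule = z)
    (hcomm : ∀ x ∈ k₁, ∀ y ∈ k₂, ⁅x, y⁆ = (0 : K))
    (c₁ c₂ : Submodule ℝ K)
    (hc₁ : z ⊔ c₁ = k₁.toSubmodule) (hc₁' : z ⊓ c₁ = ⊥)
    (hc₂ : z ⊔ c₂ = k₂.toSubmodule) (hc₂' : z ⊓ c₂ = ⊥)
    (hflat₁ : ∀ ξ₁ : K →ₗ[ℝ] ℝ, (∃ Z ∈ z, ξ₁ Z ≠ 0) → c₁ ≤ LinearMap.ker ξ₁ →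
      ∀ X ∈ k₁, X ∉ z → ∃ Y ∈ k₁, ξ₁ ⁅X, Y⁆ ≠ 0)
    (hflat₂ : ∀ ξ₂ : K →ₗ[ℝ] ℝ, (∃ Z ∈ z, ξ₂ Z ≠ 0) → c₂ ≤ LinearMap.ker ξ₂ →
      ∀ X ∈ k₂, X ∉ z → ∃ Y ∈ k₂, ξ₂ ⁅X, Y⁆ ≠ 0)
    (ξ : K →ₗ[ℝ] ℝ) (hξz : ∃ Z ∈ z, ξ Z ≠ 0)
    (hξ₁ : c₁ ≤ LinearMap.ker ξ) (hξ₂ : c₂ ≤ LinearMap.ker ξ) :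
    isotropy ξ = z := by
  apply le_antisymm
  · intro X hX
    have hX' : ∀ Y : K, ξ ⁅X, Y⁆ = 0 := hX
    -- decompose X = X₁ + X₂
    have hXtop : X ∈ k₁.toSubmodule ⊔ k₂.toSubmodule := by
      rw [hsum]; trivial
    obtain ⟨X₁, hX₁, X₂, hX₂, hXeq⟩ := Submodule.mem_sup.mp hXtop
    have h1 : X₁ ∈ z := by
      by_contra hne
      obtain ⟨Y, hY, hYne⟩ := hflat₁ ξ hξz hξ₁ X₁ hX₁ hne
      apply hYne
      have hc : ⁅X₂, Y⁆ = 0 := by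
        have := hcomm Y hY X₂ hX₂
        rw [← lie_skew, this, neg_zero]
      have : ξ ⁅X₁, Y⁆ = ξ ⁅X, Y⁆ := by
        rw [← hXeq, add_lie, hc, add_zero]
      rw [this, hX' Y]
    have h2 : X₂ ∈ z := by
      by_contra hne
      obtain ⟨Y, hY, hYne⟩ := hflat₂ ξ hξz hξ₂ X₂ hX₂ hne
      apply hYne
      have hc : ⁅X₁, Y⁆ = 0 := hcomm X₁ hX₁ Y hY
      have : ξ ⁅X₂, Y⁆ = ξ ⁅X, Y⁆ := by
        rw [← hXeq, add_lie, hc, zero_add]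
      rw [this, hX' Y]
    rw [← hXeq]
    exact z.add_mem h1 h2
  · intro X hX Y
    rw [(hz X).mp hX Y, map_zero]
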